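/- For any integer n ≥ 2, the number of exceptional units of ℤ_n multiplied by ∏_{p ∣ n} p equals n · ∏_{p ∣ n} (p - 2), where both products run over the distinct primes dividing n (equivalently, #ℤ_n^{∗∗} = n · ∏_{p ∣ n} (1 - 2/p)). -/

import Mathlib

open Finset

private lemma prod_isUnit_iff {M N : Type*} [Monoid M] [Monoid N] (x : M × N) :
    IsUnit x ↔ IsUnit x.1 ∧ IsUnit x.2 := by
  constructor
  · intro h
    exact ⟨h.map (MonoidHom.fst M N), h.map (MonoidHom.snd M N)⟩
  · rintro ⟨⟨u, hu⟩, ⟨v, hv⟩⟩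
    refine ⟨⟨(u, v), ((u⁻¹ : Mˣ), (v⁻¹ : Nˣ)), ?_, ?_⟩, ?_⟩ <;>
      simp [Prod.ext_iff, hu, hv]

private lemma ring_equiv_isUnit_iff {R S : Type*} [Ring R] [Ring S] (e : R ≃+* S) (u : R) :
    IsUnit (e u) ↔ IsUnit u := by
  constructor
  · intro h
    have := h.map e.symm.toRingHom
    simpa using this
  · intro h
    exact h.map e.toRingHom

/-- Fiberwise counting along a ring hom between `ZMod`s. -/
private lemma card_comap_mul {N M : ℕ} [NeZero N] [NeZero M] (φ : ZMod N →+* ZMod M)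
    (Q : ZMod M → Prop) [DecidablePred Q] :
    (Finset.univ.filter fun u : ZMod N => Q (φ u)).card * M
      = (Finset.univ.filter Q).card * N := by
  set c := (Finset.univ.filter fun u : ZMod N => φ u = 0).card with hc
  have hsurj : Function.Surjective φ := by
    intro v
    refine ⟨(v.val : ZMod N), ?_⟩
    rw [map_natCast, ZMod.natCast_rightInverse v]
  have hfib : ∀ v : ZMod M, (Finset.univ.filter fun u : ZMod N => φ u = v).card = c := by
    intro v
    obtain ⟨u₀, hu₀⟩ := hsurj v
    rw [hc]
    apply Finset.card_nbij' (fun u => u - u₀) (fun u => u + u₀)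
    · intro a ha
      simp only [Finset.mem_coe, Finset.mem_filter, Finset.mem_univ, true_and] at ha ⊢
      rw [map_sub, ha, hu₀, sub_self]
    · intro a ha
      simp only [Finset.mem_coe, Finset.mem_filter, Finset.mem_univ, true_and] at ha ⊢
      rw [map_add, ha, hu₀, zero_add]
    · intro a _; ring
    · intro a _; ring
  have key : ∀ (P : ZMod M → Prop) [DecidablePred P],
      (Finset.univ.filter fun u : ZMod N => P (φ u)).card
        = (Finset.univ.filter P).card * c := by
    intro P _
    rw [Finset.card_eq_sum_card_fiberwise (f := φ) (t := Finset.univ.filter P)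
      (fun x hx => by simpa using (Finset.mem_filter.mp hx).2)]
    rw [Finset.sum_congr rfl (fun v hv => ?_), Finset.sum_const, smul_eq_mul]
    have hPv : P v := (Finset.mem_filter.mp hv).2
    rw [← hfib v]
    congr 1
    ext u
    simp only [Finset.mem_filter, Finset.mem_univ, true_and]
    constructor
    · rintro ⟨_, h⟩; exact h
    · intro h; exact ⟨h ▸ hPv, h⟩
  have htot : M * c = N := by
    have := key (fun _ => True)
    simpa [ZMod.card] using this.symm
  rw [key Q, mul_assoc, mul_comm c M, htot]

private lemma card_exc_prime_pow (p k : ℕ) (hp : p.Prime) (hk : k ≠ 0) :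
    Nat.card {u : ZMod (p ^ k) // IsUnit u ∧ IsUnit (1 - u)} * p = p ^ k * (p - 2) := by
  classical
  haveI : Fact p.Prime := ⟨hp⟩
  haveI : NeZero (p ^ k) := ⟨pow_ne_zero k hp.ne_zero⟩
  set φ : ZMod (p ^ k) →+* ZMod p := ZMod.castHom (dvd_pow_self p hk) (ZMod p) with hφ
  have hunit : ∀ u : ZMod (p ^ k), IsUnit u ↔ φ u ≠ 0 := by
    intro u
    have hval : φ u = ((u.val : ℕ) : ZMod p) := by
      rw [hφ, ZMod.castHom_apply, ← ZMod.natCast_val]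
    conv_lhs => rw [← ZMod.natCast_rightInverse u]
    rw [ZMod.isUnit_iff_coprime, Nat.coprime_pow_right_iff (Nat.pos_of_ne_zero hk),
      Nat.coprime_comm, hp.coprime_iff_not_dvd, hval,
      Ne, ZMod.natCast_eq_zero_iff]
  have hcond : ∀ u : ZMod (p ^ k),
      (IsUnit u ∧ IsUnit (1 - u)) ↔ (φ u ≠ 0 ∧ φ u ≠ 1) := by
    intro u
    rw [hunit u, hunit (1 - u), map_sub, map_one, sub_ne_zero]
    tauto
  have hQcard : (Finset.univ.filter fun v : ZMod p => v ≠ 0 ∧ v ≠ 1).card = p - 2 := by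
    have h01 : (0 : ZMod p) ≠ 1 := zero_ne_one
    have hset : (Finset.univ.filter fun v : ZMod p => v ≠ 0 ∧ v ≠ 1)
        = Finset.univ \ {0, 1} := by
      ext v
      simp [not_or]
    rw [hset, Finset.card_sdiff_of_subset (Finset.subset_univ _), Finset.card_univ, ZMod.card,
      Finset.card_pair h01]
  have hcard : Nat.card {u : ZMod (p ^ k) // IsUnit u ∧ IsUnit (1 - u)}
      = (Finset.univ.filter fun u : ZMod (p ^ k) => φ u ≠ 0 ∧ φ u ≠ 1).card := by
    rw [Nat.card_congr (Equiv.subtypeEquivRight hcond), Nat.card_eq_fintype_card,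
      Fintype.card_subtype]
  rw [hcard]
  have := card_comap_mul φ (fun v => v ≠ 0 ∧ v ≠ 1)
  rw [this, hQcard, mul_comm]

private lemma card_exc_mul {a b : ℕ} (h : Nat.Coprime a b) :
    Nat.card {u : ZMod (a * b) // IsUnit u ∧ IsUnit (1 - u)}
      = Nat.card {u : ZMod a // IsUnit u ∧ IsUnit (1 - u)}
        * Nat.card {u : ZMod b // IsUnit u ∧ IsUnit (1 - u)} := by
  set e := ZMod.chineseRemainder h with he
  rw [← Nat.card_prod]
  refine Nat.card_congr
    ((Equiv.subtypeEquiv e.toEquiv (fun u => ?_)).trans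
      (Equiv.subtypeProdEquivProd))
  calc IsUnit u ∧ IsUnit (1 - u)
      ↔ IsUnit (e u) ∧ IsUnit (1 - e u) :=
        and_congr (ring_equiv_isUnit_iff e u).symm
          (by rw [show (1 : ZMod a × ZMod b) - e u = e (1 - u) by rw [map_sub, map_one]]
              exact (ring_equiv_isUnit_iff e (1 - u)).symm)
    _ ↔ (IsUnit (e u).1 ∧ IsUnit (e u).2) ∧ (IsUnit (1 - e u).1 ∧ IsUnit (1 - e u).2) :=
        and_congr (prod_isUnit_iff _) (prod_isUnit_iff _)
    _ ↔ (IsUnit (e u).1 ∧ IsUnit (1 - (e u).1)) ∧ (IsUnit (e u).2 ∧ IsUnit (1 - (e u).2)) := by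
        simp only [Prod.fst_sub, Prod.snd_sub, Prod.fst_one, Prod.snd_one]
        tauto

private lemma card_exc_all (n : ℕ) :
    Nat.card {u : ZMod n // IsUnit u ∧ IsUnit (1 - u)} * ∏ p ∈ n.primeFactors, p =
      n * ∏ p ∈ n.primeFactors, (p - 2) := by
  induction n using Nat.recOnPosPrimePosCoprime with
  | prime_pow p k hp hk =>
    have hp' : p.Prime := hp
    rw [Nat.primeFactors_prime_pow hk.ne' hp, Finset.prod_singleton, Finset.prod_singleton]
    exact card_exc_prime_pow p k hp' hk.ne'
  | zero =>
    have : IsEmpty {u : ZMod 0 // IsUnit u ∧ IsUnit (1 - u)} := by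
      constructor
      rintro ⟨u, h1, h2⟩
      change @IsUnit ℤ _ (show ℤ from u) at h1
      change @IsUnit ℤ _ (1 - (show ℤ from u)) at h2
      rw [Int.isUnit_iff] at h1 h2
      rcases h1 with rfl | rfl
      · simp at h2
      · rw [sub_neg_eq_add] at h2
        change (1:ℤ) + 1 = 1 ∨ (1:ℤ) + 1 = -1 at h2
        omega
    simp [Nat.card_of_isEmpty]
  | one =>
    haveI : Unique {u : ZMod 1 // IsUnit u ∧ IsUnit (1 - u)} :=
      ⟨⟨⟨0, isUnit_of_subsingleton _, isUnit_of_subsingleton _⟩⟩,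
        fun a => Subtype.ext (Subsingleton.elim _ _)⟩
    rw [Nat.card_unique]
    simp
  | coprime a b ha hb hab iha ihb =>
    have ha0 : a ≠ 0 := by omega
    have hb0 : b ≠ 0 := by omega
    rw [card_exc_mul hab, Nat.primeFactors_mul ha0 hb0,
      Finset.prod_union hab.disjoint_primeFactors,
      Finset.prod_union hab.disjoint_primeFactors,
      mul_mul_mul_comm, iha, ihb, mul_mul_mul_comm]

theorem card_exceptional_units (n : ℕ) (hn : 2 ≤ n) :
    Nat.card {u : ZMod n // IsUnit u ∧ IsUnit (1 - u)} * ∏ p ∈ n.primeFactors, p =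
      n * ∏ p ∈ n.primeFactors, (p - 2) := by
  exact card_exc_all n
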